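/- Every triangle-free finite simple graph Γ on n vertices has at most 2^{n/2} maximal independent sets, i.e. mis(Γ) ≤ 2^{n/2}. -/

import Mathlib

/-- The number of maximal independent sets of a simple graph. -/
noncomputable def misSG {V : Type*} (Γ : SimpleGraph V) : ℕ :=
  Nat.card {I : Set V // (∀ x ∈ I, ∀ y ∈ I, ¬ Γ.Adj x y) ∧
    ∀ J : Set V, (∀ x ∈ J, ∀ y ∈ J, ¬ Γ.Adj x y) → I ⊆ J → I = J}

open SimpleGraph Set

section Aux

variable {V : Type*}

def IndepHT (Γ : SimpleGraph V) (I : Set V) : Prop := ∀ x ∈ I, ∀ y ∈ I, ¬ Γ.Adj x y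

def MISHT (Γ : SimpleGraph V) (I : Set V) : Prop :=
  IndepHT Γ I ∧ ∀ J : Set V, IndepHT Γ J → I ⊆ J → I = J

lemma misSG_eq (Γ : SimpleGraph V) : misSG Γ = Nat.card {I : Set V // MISHT Γ I} := rfl

lemma misHT_iff {Γ : SimpleGraph V} {I : Set V} :
    MISHT Γ I ↔ IndepHT Γ I ∧ ∀ x, x ∉ I → ∃ y ∈ I, Γ.Adj x y := by
  constructor
  · rintro ⟨hI, hmax⟩
    refine ⟨hI, fun x hx => ?_⟩
    by_contra h
    push_neg at h
    have heq : I = insert x I := by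
      refine hmax _ ?_ (subset_insert x I)
      rintro a (rfl | ha) b (rfl | hb) hab
      · exact Γ.irrefl hab
      · exact h b hb hab
      · exact h a ha (Γ.adj_symm hab)
      · exact hI a ha b hb hab
    exact hx (heq ▸ mem_insert x I)
  · rintro ⟨hI, hdom⟩
    refine ⟨hI, fun J hJ hIJ => ?_⟩
    ext z
    refine ⟨fun hz => hIJ hz, fun hz => ?_⟩
    by_contra hzI
    obtain ⟨y, hy, hadj⟩ := hdom z hzI
    exact hJ z hz y (hIJ hy) hadj

lemma card_piece [Finite V] (Γ : SimpleGraph V) (A T : Set V)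
    (hN : ∀ t ∈ T, ∀ x, Γ.Adj t x → x ∈ A) :
    Nat.card {I : Set V // MISHT Γ I ∧ I ∩ A = T} ≤ misSG (Γ.induce Aᶜ) := by
  rw [misSG_eq]
  have key : ∀ I : {I : Set V // MISHT Γ I ∧ I ∩ A = T},
      MISHT (Γ.induce Aᶜ) (Subtype.val ⁻¹' I.1) := by
    rintro ⟨I, hI, hIA⟩
    rw [misHT_iff]
    constructor
    · rintro x hx y hy hadj
      exact hI.1 x hx y hy hadj
    · rintro x hx
      obtain ⟨y, hy, hadj⟩ := (misHT_iff.mp hI).2 x hx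
      have hyA : y ∉ A := by
        intro hyA
        have hyT : y ∈ T := hIA ▸ ⟨hy, hyA⟩
        exact x.2 (hN y hyT x (Γ.adj_symm hadj))
      exact ⟨⟨y, hyA⟩, hy, hadj⟩
  apply Nat.card_le_card_of_injective (fun I => ⟨Subtype.val ⁻¹' I.1, key I⟩)
  rintro ⟨I₁, hI₁, hIA₁⟩ ⟨I₂, hI₂, hIA₂⟩ h
  simp only [Subtype.mk.injEq] at h ⊢
  ext x
  by_cases hxA : x ∈ A
  · constructor
    · intro hx
      have : x ∈ T := hIA₁ ▸ ⟨hx, hxA⟩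
      exact ((hIA₂ ▸ this : x ∈ I₂ ∩ A)).1
    · intro hx
      have : x ∈ T := hIA₂ ▸ ⟨hx, hxA⟩
      exact ((hIA₁ ▸ this : x ∈ I₁ ∩ A)).1
  · have := Set.ext_iff.mp h ⟨x, hxA⟩
    simpa using this

lemma card_or_le [Finite V] (p q : Set V → Prop) :
    Nat.card {I : Set V // p I ∨ q I} ≤ Nat.card {I : Set V // p I} + Nat.card {I : Set V // q I} := by
  have h1 : {I : Set V | p I ∨ q I} = {I | p I} ∪ {I | q I} := by ext; simp
  calc Nat.card {I : Set V // p I ∨ q I} = ({I : Set V | p I ∨ q I}).ncard :=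
        Nat.card_coe_set_eq _
    _ = ({I : Set V | p I} ∪ {I | q I}).ncard := by rw [h1]
    _ ≤ ({I : Set V | p I}).ncard + ({I : Set V | q I}).ncard := Set.ncard_union_le _ _
    _ = _ := by rw [← Nat.card_coe_set_eq, ← Nat.card_coe_set_eq]; rfl

end Aux

section Arith

lemma rpow_shiftHT (x k : ℝ) : (2:ℝ) ^ ((x - k)/2) = 2 ^ (x/2) * 2 ^ (-k/2) := by
  rw [← Real.rpow_add (by norm_num)]; ring_nf

lemma c_halfHT : (2:ℝ) ^ (-(1:ℝ)/2) ≤ 3/4 := by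
  have hs : Real.sqrt 2 ^ 2 = 2 := Real.sq_sqrt (by norm_num)
  have hs0 : 0 < Real.sqrt 2 := Real.sqrt_pos.mpr (by norm_num)
  have h1 : (2:ℝ) ^ ((1:ℝ)/2) = Real.sqrt 2 := by
    rw [Real.sqrt_eq_rpow]
  have h43 : (4:ℝ)/3 ≤ Real.sqrt 2 := by nlinarith
  rw [show (-(1:ℝ)/2) = -((1:ℝ)/2) by ring, Real.rpow_neg (by norm_num), h1]
  rw [inv_le_comm₀ hs0 (by norm_num)]
  linarith

lemma c2HT : (2:ℝ) ^ (-(2:ℝ)/2) = 1/2 := by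
  rw [show -(2:ℝ)/2 = ((-1:ℤ):ℝ) by norm_num, Real.rpow_intCast]
  norm_num

lemma c4HT : (2:ℝ) ^ (-(4:ℝ)/2) = 1/4 := by
  rw [show -(4:ℝ)/2 = ((-2:ℤ):ℝ) by norm_num, Real.rpow_intCast]
  norm_num

lemma c3HT : (2:ℝ) ^ (-(3:ℝ)/2) = (1/2) * 2 ^ (-(1:ℝ)/2) := by
  rw [show -(3:ℝ)/2 = (((-1:ℤ):ℝ)) + (-(1:ℝ)/2) by norm_num, Real.rpow_add (by norm_num),
    Real.rpow_intCast]
  norm_num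

lemma arithA1 (x : ℝ) : (2:ℝ) ^ ((x-1)/2) ≤ 2 ^ (x/2) :=
  Real.rpow_le_rpow_of_exponent_le (by norm_num) (by linarith)

lemma arithA2 (x : ℝ) : (2:ℝ) ^ ((x-2)/2) + 2 ^ ((x-2)/2) ≤ 2 ^ (x/2) := by
  rw [rpow_shiftHT, c2HT]
  have hp : (0:ℝ) < 2 ^ (x/2) := Real.rpow_pos_of_pos (by norm_num) _
  nlinarith

lemma arithA3 (x : ℝ) : (2:ℝ) ^ ((x-4)/2) + 2 ^ ((x-1)/2) ≤ 2 ^ (x/2) := by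
  rw [rpow_shiftHT, rpow_shiftHT, c4HT]
  have hp : (0:ℝ) < 2 ^ (x/2) := Real.rpow_pos_of_pos (by norm_num) _
  nlinarith [c_halfHT]

lemma arithA4 (x : ℝ) : (2:ℝ) ^ ((x-3)/2) + 2 ^ ((x-3)/2) + 2 ^ ((x-4)/2) ≤ 2 ^ (x/2) := by
  rw [rpow_shiftHT, rpow_shiftHT, c4HT, c3HT]
  have hp : (0:ℝ) < 2 ^ (x/2) := Real.rpow_pos_of_pos (by norm_num) _
  nlinarith [c_halfHT]

end Arith

lemma mainHT : ∀ n : ℕ, ∀ (W : Type) (_ : Finite W) (Γ : SimpleGraph W),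
    Γ.CliqueFree 3 → Nat.card W = n → (misSG Γ : ℝ) ≤ 2 ^ ((n : ℝ) / 2) := by
  intro n
  induction n using Nat.strong_induction_on with
  | _ n IH =>
  intro W hfin Γ htri hcard
  haveI := hfin
  -- the generic piece bound
  have piece : ∀ (A T : Set W) (k : ℕ), (∀ t ∈ T, ∀ x, Γ.Adj t x → x ∈ A) →
      k ≤ A.ncard → 0 < k →
      (Nat.card {I : Set W // MISHT Γ I ∧ I ∩ A = T} : ℝ) ≤ 2 ^ (((n:ℝ) - (k:ℝ)) / 2) := by
    intro A T k hN hk hk0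
    have hm : A.ncard + (Aᶜ).ncard = n := by
      rw [Set.ncard_add_ncard_compl]; exact hcard
    have hlt : (Aᶜ).ncard < n := by omega
    have hsub : (misSG (Γ.induce Aᶜ) : ℝ) ≤ 2 ^ (((Aᶜ.ncard : ℕ) : ℝ)/2) := by
      refine IH _ hlt _ inferInstance _ (htri.comap ⟨(SimpleGraph.Embedding.induce Aᶜ).toCopy⟩) ?_
      rw [Nat.card_coe_set_eq]
    have h1 : (Nat.card {I : Set W // MISHT Γ I ∧ I ∩ A = T} : ℝ) ≤ misSG (Γ.induce Aᶜ) := by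
      exact_mod_cast Nat.cast_le.mpr (card_piece Γ A T hN)
    refine h1.trans (hsub.trans ?_)
    apply Real.rpow_le_rpow_of_exponent_le (by norm_num)
    have : ((Aᶜ.ncard : ℕ) : ℝ) = (n:ℝ) - (A.ncard : ℝ) := by
      have := hm
      push_cast [← this]
      ring
    rw [this]
    have : (k:ℝ) ≤ (A.ncard : ℝ) := by exact_mod_cast hk
    linarith
  -- covering lemmas
  have cover2 : ∀ (C1 C2 : Set W → Prop), (∀ I, MISHT Γ I → C1 I ∨ C2 I) →
      misSG Γ ≤ Nat.card {I : Set W // MISHT Γ I ∧ C1 I} +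
        Nat.card {I : Set W // MISHT Γ I ∧ C2 I} := by
    intro C1 C2 hcov
    have h0 : misSG Γ ≤
        Nat.card {I : Set W // (MISHT Γ I ∧ C1 I) ∨ (MISHT Γ I ∧ C2 I)} := by
      rw [misSG_eq]
      apply Nat.card_le_card_of_injective
        (fun I => ⟨I.1, by
          rcases hcov I.1 I.2 with h | h
          exacts [Or.inl ⟨I.2, h⟩, Or.inr ⟨I.2, h⟩]⟩)
      intro a b hab
      simp only [Subtype.mk.injEq] at hab
      exact Subtype.ext hab
    exact h0.trans (card_or_le _ _)
  have cover3 : ∀ (C1 C2 C3 : Set W → Prop), (∀ I, MISHT Γ I → C1 I ∨ C2 I ∨ C3 I) →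
      misSG Γ ≤ Nat.card {I : Set W // MISHT Γ I ∧ C1 I} +
        Nat.card {I : Set W // MISHT Γ I ∧ C2 I} +
        Nat.card {I : Set W // MISHT Γ I ∧ C3 I} := by
    intro C1 C2 C3 hcov
    have h0 : misSG Γ ≤
        Nat.card {I : Set W // (MISHT Γ I ∧ C1 I) ∨ ((MISHT Γ I ∧ C2 I) ∨ (MISHT Γ I ∧ C3 I))} := by
      rw [misSG_eq]
      apply Nat.card_le_card_of_injective
        (fun I => ⟨I.1, by
          rcases hcov I.1 I.2 with h | h | h
          exacts [Or.inl ⟨I.2, h⟩, Or.inr (Or.inl ⟨I.2, h⟩), Or.inr (Or.inr ⟨I.2, h⟩)]⟩)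
      intro a b hab
      simp only [Subtype.mk.injEq] at hab
      exact Subtype.ext hab
    refine h0.trans ((card_or_le _ _).trans ?_)
    have := card_or_le (fun I => MISHT Γ I ∧ C2 I) (fun I => MISHT Γ I ∧ C3 I)
    omega
  -- base case: empty vertex type
  by_cases hW : IsEmpty W
  · have hsub : Subsingleton (Set W) := ⟨fun a b => by ext x; exact (hW.false x).elim⟩
    have h1 : misSG Γ ≤ 1 := by
      rw [misSG_eq]
      calc Nat.card {I : Set W // MISHT Γ I} ≤ Nat.card Unit :=
            Nat.card_le_card_of_injective (fun _ => ())
              (fun a b _ => Subtype.ext (Subsingleton.elim _ _))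
        _ = 1 := Nat.card_unique
    have h2 : (1:ℝ) ≤ 2 ^ ((n:ℝ)/2) := by
      rw [show (1:ℝ) = (2:ℝ) ^ (0:ℝ) from (Real.rpow_zero 2).symm]
      exact Real.rpow_le_rpow_of_exponent_le (by norm_num) (by positivity)
    calc (misSG Γ : ℝ) ≤ 1 := by exact_mod_cast h1
      _ ≤ _ := h2
  rw [not_isEmpty_iff] at hW
  have cover1 : ∀ (C1 : Set W → Prop), (∀ I, MISHT Γ I → C1 I) →
      misSG Γ ≤ Nat.card {I : Set W // MISHT Γ I ∧ C1 I} := by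
    intro C1 hcov
    rw [misSG_eq]
    apply Nat.card_le_card_of_injective (fun I => ⟨I.1, I.2, hcov I.1 I.2⟩)
    intro a b hab
    simp only [Subtype.mk.injEq] at hab
    exact Subtype.ext hab
  by_cases hiso : ∃ v, Γ.neighborSet v = ∅
  · -- Case 1: isolated vertex
    obtain ⟨v, hv0⟩ := hiso
    have hcov : ∀ I, MISHT Γ I → I ∩ {v} = {v} := by
      intro I hI
      have hv : v ∈ I := by
        by_contra hv
        obtain ⟨y, hy, hadj⟩ := (misHT_iff.mp hI).2 v hv
        have hmem : y ∈ Γ.neighborSet v := hadj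
        rw [hv0] at hmem
        exact hmem
      ext x
      simp only [Set.mem_inter_iff, Set.mem_singleton_iff]
      exact ⟨fun h => h.2, fun h => ⟨h ▸ hv, h⟩⟩
    have hp1 := piece {v} {v} 1 (by
        intro t ht x hadj
        rw [Set.mem_singleton_iff] at ht
        subst ht
        exact absurd (show x ∈ Γ.neighborSet t from hadj) (by rw [hv0]; exact notMem_empty x))
      (by rw [Set.ncard_singleton]) one_pos
    push_cast at hp1
    calc (misSG Γ : ℝ) ≤ (Nat.card {I : Set W // MISHT Γ I ∧ I ∩ {v} = {v}} : ℝ) := by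
          exact_mod_cast cover1 _ hcov
      _ ≤ 2 ^ (((n:ℝ) - 1)/2) := hp1
      _ ≤ _ := arithA1 _
  by_cases h1 : ∃ v u, Γ.neighborSet v = {u}
  · -- Case 2: a vertex of degree 1
    obtain ⟨v, u, hvu⟩ := h1
    have hadj_vu : Γ.Adj v u := by
      have : u ∈ Γ.neighborSet v := by rw [hvu]; rfl
      exact this
    have hne : u ≠ v := fun h => Γ.irrefl (h ▸ hadj_vu)
    have hadj_uv : Γ.Adj u v := Γ.adj_symm hadj_vu
    have hcov : ∀ I, MISHT Γ I →
        I ∩ {v, u} = {v} ∨ I ∩ (insert u (Γ.neighborSet u)) = {u} := by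
      intro I hI
      by_cases hv : v ∈ I
      · left
        ext x
        simp only [Set.mem_inter_iff, Set.mem_insert_iff, Set.mem_singleton_iff]
        constructor
        · rintro ⟨hxI, rfl | rfl⟩
          · rfl
          · exact absurd hadj_vu (hI.1 v hv _ hxI)
        · rintro rfl; exact ⟨hv, Or.inl rfl⟩
      · right
        have hu : u ∈ I := by
          obtain ⟨y, hy, hadj⟩ := (misHT_iff.mp hI).2 v hv
          have hmem : y ∈ Γ.neighborSet v := hadj
          rw [hvu, Set.mem_singleton_iff] at hmem
          rwa [← hmem]
        ext x
        simp only [Set.mem_inter_iff, Set.mem_insert_iff, Set.mem_singleton_iff,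
          SimpleGraph.mem_neighborSet]
        constructor
        · rintro ⟨hxI, rfl | hadj⟩
          · rfl
          · exact absurd hadj (hI.1 u hu x hxI)
        · rintro rfl; exact ⟨hu, Or.inl rfl⟩
    have hbound := cover2 _ _ hcov
    have hp1 := piece {v, u} {v} 2 (by
        intro t ht x hadj
        rw [Set.mem_singleton_iff] at ht
        subst ht
        have : x ∈ Γ.neighborSet t := hadj
        rw [hvu, Set.mem_singleton_iff] at this
        exact Or.inr this)
      (by rw [Set.ncard_pair (Ne.symm hne)]) (by norm_num)
    have hp2 := piece (insert u (Γ.neighborSet u)) {u} 2 (by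
        intro t ht x hadj
        rw [Set.mem_singleton_iff] at ht
        subst ht
        exact Set.mem_insert_of_mem _ hadj)
      (by
        have hsub2 : ({u, v} : Set W) ⊆ insert u (Γ.neighborSet u) := by
          rintro x (rfl | rfl)
          · exact Set.mem_insert _ _
          · exact Set.mem_insert_of_mem _ hadj_uv
        calc 2 = ({u, v} : Set W).ncard := (Set.ncard_pair hne).symm
          _ ≤ _ := Set.ncard_le_ncard hsub2 (Set.toFinite _))
      (by norm_num)
    have hb' : (misSG Γ : ℝ) ≤
        (Nat.card {I : Set W // MISHT Γ I ∧ I ∩ {v, u} = {v}} : ℝ) +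
        (Nat.card {I : Set W // MISHT Γ I ∧ I ∩ (insert u (Γ.neighborSet u)) = {u}} : ℝ) := by
      exact_mod_cast hbound
    push_cast at hp1 hp2
    have := arithA2 (n:ℝ)
    linarith
  by_cases h3 : ∃ v, 3 ≤ (Γ.neighborSet v).ncard
  · -- Case 3: a vertex of degree ≥ 3
    obtain ⟨v, hv3⟩ := h3
    have hvnot : v ∉ Γ.neighborSet v := fun h => Γ.irrefl h
    have hcov : ∀ I, MISHT Γ I →
        I ∩ (insert v (Γ.neighborSet v)) = {v} ∨ I ∩ {v} = (∅ : Set W) := by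
      intro I hI
      by_cases hv : v ∈ I
      · left
        ext x
        simp only [Set.mem_inter_iff, Set.mem_insert_iff, Set.mem_singleton_iff,
          SimpleGraph.mem_neighborSet]
        constructor
        · rintro ⟨hxI, rfl | hadj⟩
          · rfl
          · exact absurd hadj (hI.1 v hv x hxI)
        · rintro rfl; exact ⟨hv, Or.inl rfl⟩
      · right
        ext x
        simp only [Set.mem_inter_iff, Set.mem_singleton_iff, Set.mem_empty_iff_false, iff_false,
          not_and]
        rintro hxI rfl
        exact hv hxI
    have hbound := cover2 _ _ hcov
    have hp1 := piece (insert v (Γ.neighborSet v)) {v} 4 (by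
        intro t ht x hadj
        rw [Set.mem_singleton_iff] at ht
        subst ht
        exact Set.mem_insert_of_mem _ hadj)
      (by
        rw [Set.ncard_insert_of_notMem hvnot (Set.toFinite _)]
        omega)
      (by norm_num)
    have hp2 := piece {v} (∅ : Set W) 1 (by
        intro t ht
        exact absurd ht (Set.notMem_empty t))
      (by rw [Set.ncard_singleton]) one_pos
    have hb' : (misSG Γ : ℝ) ≤
        (Nat.card {I : Set W // MISHT Γ I ∧ I ∩ (insert v (Γ.neighborSet v)) = {v}} : ℝ) +
        (Nat.card {I : Set W // MISHT Γ I ∧ I ∩ {v} = (∅ : Set W)} : ℝ) := by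
      exact_mod_cast hbound
    push_cast at hp1 hp2
    have := arithA3 (n:ℝ)
    linarith
  · -- Case 4: all degrees equal 2
    haveI := Classical.decEq W
    obtain ⟨v⟩ := hW
    push_neg at h3
    have hdeg : ∀ x : W, (Γ.neighborSet x).ncard = 2 := by
      intro x
      have h0 : (Γ.neighborSet x).Nonempty := by
        rcases Set.eq_empty_or_nonempty (Γ.neighborSet x) with h | h
        · exact absurd ⟨x, h⟩ hiso
        · exact h
      have hge : 0 < (Γ.neighborSet x).ncard := (Set.ncard_pos (Set.toFinite _)).mpr h0
      have hne1 : (Γ.neighborSet x).ncard ≠ 1 := by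
        intro h
        obtain ⟨a, ha⟩ := Set.ncard_eq_one.mp h
        exact h1 ⟨x, a, ha⟩
      have hlt3 := h3 x
      omega
    have hpair : ∀ (s : Set W) (x : W), s.ncard = 2 → x ∈ s → ∃ y, y ≠ x ∧ s = {x, y} := by
      intro s x hs hx
      obtain ⟨a, b, hab, rfl⟩ := Set.ncard_eq_two.mp hs
      rcases hx with rfl | hx
      · exact ⟨b, Ne.symm hab, rfl⟩
      · rw [Set.mem_singleton_iff] at hx
        subst hx
        exact ⟨a, hab, Set.pair_comm a x⟩
    obtain ⟨u, w, huw, hvN⟩ := Set.ncard_eq_two.mp (hdeg v)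
    have hadj_vu : Γ.Adj v u := by
      have : u ∈ Γ.neighborSet v := by rw [hvN]; exact Or.inl rfl
      exact this
    have hadj_vw : Γ.Adj v w := by
      have : w ∈ Γ.neighborSet v := by rw [hvN]; exact Or.inr rfl
      exact this
    have hvmem : v ∈ Γ.neighborSet u := Γ.adj_symm hadj_vu
    obtain ⟨u', hu'v, huN⟩ := hpair _ v (hdeg u) hvmem
    have hadj_uu' : Γ.Adj u u' := by
      have : u' ∈ Γ.neighborSet u := by rw [huN]; exact Or.inr rfl
      exact this
    have hneq_uv : u ≠ v := fun h => Γ.irrefl (h ▸ hadj_vu)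
    have hneq_wv : w ≠ v := fun h => Γ.irrefl (h ▸ hadj_vw)
    have hneq_u'u : u' ≠ u := fun h => Γ.irrefl (h ▸ hadj_uu')
    have hnadj_uw : ¬ Γ.Adj u w := fun h =>
      htri {v, u, w} (SimpleGraph.is3Clique_triple_iff.mpr ⟨hadj_vu, hadj_vw, h⟩)
    have hneq_u'w : u' ≠ w := fun h => hnadj_uw (h ▸ hadj_uu')
    have hcov : ∀ I, MISHT Γ I →
        I ∩ (insert v (Γ.neighborSet v)) = {v} ∨
        I ∩ (insert u (Γ.neighborSet u)) = {u} ∨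
        I ∩ ((insert w (Γ.neighborSet w)) ∪ (insert u' (Γ.neighborSet u'))) = {w, u'} := by
      intro I hI
      by_cases hv : v ∈ I
      · left
        ext x
        simp only [Set.mem_inter_iff, Set.mem_insert_iff, Set.mem_singleton_iff,
          SimpleGraph.mem_neighborSet]
        constructor
        · rintro ⟨hxI, rfl | hadj⟩
          · rfl
          · exact absurd hadj (hI.1 v hv x hxI)
        · rintro rfl; exact ⟨hv, Or.inl rfl⟩
      by_cases hu : u ∈ I
      · right; left
        ext x
        simp only [Set.mem_inter_iff, Set.mem_insert_iff, Set.mem_singleton_iff,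
          SimpleGraph.mem_neighborSet]
        constructor
        · rintro ⟨hxI, rfl | hadj⟩
          · rfl
          · exact absurd hadj (hI.1 u hu x hxI)
        · rintro rfl; exact ⟨hu, Or.inl rfl⟩
      · right; right
        have hw : w ∈ I := by
          obtain ⟨y, hy, hadj⟩ := (misHT_iff.mp hI).2 v hv
          have hmem : y ∈ Γ.neighborSet v := hadj
          rw [hvN] at hmem
          rcases hmem with rfl | hmem
          · exact absurd hy hu
          · rw [Set.mem_singleton_iff] at hmem
            subst hmem
            exact hy
        have hu'I : u' ∈ I := by
          obtain ⟨y, hy, hadj⟩ := (misHT_iff.mp hI).2 u hu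
          have hmem : y ∈ Γ.neighborSet u := hadj
          rw [huN] at hmem
          rcases hmem with rfl | hmem
          · exact absurd hy hv
          · rw [Set.mem_singleton_iff] at hmem
            subst hmem
            exact hy
        ext x
        simp only [Set.mem_inter_iff, Set.mem_union, Set.mem_insert_iff, Set.mem_singleton_iff,
          SimpleGraph.mem_neighborSet]
        constructor
        · rintro ⟨hxI, (rfl | hadj) | (rfl | hadj)⟩
          · exact Or.inl rfl
          · exact absurd hadj (hI.1 w hw x hxI)
          · exact Or.inr rfl
          · exact absurd hadj (hI.1 u' hu'I x hxI)
        · rintro (rfl | rfl)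
          · exact ⟨hw, Or.inl (Or.inl rfl)⟩
          · exact ⟨hu'I, Or.inr (Or.inl rfl)⟩
    have hbound := cover3 _ _ _ hcov
    have hp1 := piece (insert v (Γ.neighborSet v)) {v} 3 (by
        intro t ht x hadj
        rw [Set.mem_singleton_iff] at ht
        subst ht
        exact Set.mem_insert_of_mem _ hadj)
      (by
        rw [Set.ncard_insert_of_notMem (Γ.notMem_neighborSet_self) (Set.toFinite _), hdeg v])
      (by norm_num)
    have hp2 := piece (insert u (Γ.neighborSet u)) {u} 3 (by
        intro t ht x hadj
        rw [Set.mem_singleton_iff] at ht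
        subst ht
        exact Set.mem_insert_of_mem _ hadj)
      (by
        rw [Set.ncard_insert_of_notMem (Γ.notMem_neighborSet_self) (Set.toFinite _), hdeg u])
      (by norm_num)
    have hp3 := piece ((insert w (Γ.neighborSet w)) ∪ (insert u' (Γ.neighborSet u'))) {w, u'} 4
      (by
        rintro t ht x hadj
        rcases ht with rfl | ht
        · exact Set.mem_union_left _ (Set.mem_insert_of_mem _ hadj)
        · rw [Set.mem_singleton_iff] at ht
          subst ht
          exact Set.mem_union_right _ (Set.mem_insert_of_mem _ hadj))
      (by
        have hsub4 : ({u, v, w, u'} : Set W) ⊆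
            (insert w (Γ.neighborSet w)) ∪ (insert u' (Γ.neighborSet u')) := by
          rintro x (rfl | rfl | rfl | hx)
          · exact Set.mem_union_right _ (Set.mem_insert_of_mem _ (Γ.adj_symm hadj_uu'))
          · exact Set.mem_union_left _ (Set.mem_insert_of_mem _ (Γ.adj_symm hadj_vw))
          · exact Set.mem_union_left _ (Set.mem_insert _ _)
          · rw [Set.mem_singleton_iff] at hx
            subst hx
            exact Set.mem_union_right _ (Set.mem_insert _ _)
        have h4 : ({u, v, w, u'} : Set W).ncard = 4 := by
          rw [Set.ncard_insert_of_notMem (by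
              simp only [Set.mem_insert_iff, Set.mem_singleton_iff]
              push_neg
              exact ⟨hneq_uv, huw, Ne.symm hneq_u'u⟩) (Set.toFinite _),
            Set.ncard_insert_of_notMem (by
              simp only [Set.mem_insert_iff, Set.mem_singleton_iff]
              push_neg
              exact ⟨Ne.symm hneq_wv, Ne.symm hu'v⟩) (Set.toFinite _),
            Set.ncard_insert_of_notMem (by
              simp only [Set.mem_singleton_iff]
              exact Ne.symm hneq_u'w) (Set.toFinite _),
            Set.ncard_singleton]
        calc 4 = ({u, v, w, u'} : Set W).ncard := h4.symm
          _ ≤ _ := Set.ncard_le_ncard hsub4 (Set.toFinite _))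
      (by norm_num)
    have hb' : (misSG Γ : ℝ) ≤
        (Nat.card {I : Set W // MISHT Γ I ∧ I ∩ (insert v (Γ.neighborSet v)) = {v}} : ℝ) +
        (Nat.card {I : Set W // MISHT Γ I ∧ I ∩ (insert u (Γ.neighborSet u)) = {u}} : ℝ) +
        (Nat.card {I : Set W // MISHT Γ I ∧
          I ∩ ((insert w (Γ.neighborSet w)) ∪ (insert u' (Γ.neighborSet u'))) = {w, u'}} : ℝ) := by
      exact_mod_cast hbound
    push_cast at hp1 hp2 hp3
    have := arithA4 (n:ℝ)
    linarith


/-- Hujter–Tuza: a triangle-free finite simple graph on `n` vertices has at most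
`2 ^ (n/2)` maximal independent sets. -/
theorem hujter_tuza (V : Type) [Fintype V] (Γ : SimpleGraph V)
    (htri : Γ.CliqueFree 3) :
    (misSG Γ : ℝ) ≤ 2 ^ ((Fintype.card V : ℝ) / 2) := by
  exact mainHT (Fintype.card V) V inferInstance Γ htri Nat.card_eq_fintype_card
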